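/- Let P be a nontrivial projection (P ≠ 0, P ≠ I) on a complex Hilbert space H, and suppose P = μT + (1−μ)S + λI where 0 < μ < 1, T and S are bounded positive self-adjoint operators with 0 ≤ T ≤ I and 0 ≤ S ≤ I, 0 ∈ σ(T), 0 ∈ σ(S), and λ ∈ ℝ. Then λ = 0. -/

import Mathlib

variable {H : Type*} [NormedAddCommGroup H] [InnerProductSpace ℂ H] [CompleteSpace H]

lemma my_inner_real_smul_left (r : ℝ) (x y : H) :
    (inner ℂ (r • x) y : ℂ) = r • (inner ℂ x y : ℂ) := by
  rw [RCLike.real_smul_eq_coe_smul (K := ℂ), inner_smul_left]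
  simp [RCLike.real_smul_eq_coe_smul (K := ℂ)]

lemma key_re (T S : H →L[ℂ] H) (μ lam : ℝ) (v : H) :
    RCLike.re (inner ℂ ((μ • T + (1 - μ) • S + lam • (1 : H →L[ℂ] H)) v) v : ℂ) =
      μ * T.reApplyInnerSelf v + (1 - μ) * S.reApplyInnerSelf v + lam * ‖v‖ ^ 2 := by
  rw [ContinuousLinearMap.add_apply, ContinuousLinearMap.add_apply,
    ContinuousLinearMap.smul_apply, ContinuousLinearMap.smul_apply,
    ContinuousLinearMap.smul_apply, ContinuousLinearMap.one_apply,
    inner_add_left, inner_add_left, my_inner_real_smul_left, my_inner_real_smul_left,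
    my_inner_real_smul_left, map_add, map_add, RCLike.smul_re, RCLike.smul_re, RCLike.smul_re,
    ContinuousLinearMap.reApplyInnerSelf, ContinuousLinearMap.reApplyInnerSelf]
  rw [inner_self_eq_norm_sq_to_K]
  norm_cast

lemma sub_reApply (T : H →L[ℂ] H) (v : H) :
    ((1 : H →L[ℂ] H) - T).reApplyInnerSelf v = ‖v‖ ^ 2 - T.reApplyInnerSelf v := by
  rw [ContinuousLinearMap.reApplyInnerSelf, ContinuousLinearMap.sub_apply,
    ContinuousLinearMap.one_apply, inner_sub_left, map_sub,
    ContinuousLinearMap.reApplyInnerSelf, inner_self_eq_norm_sq_to_K]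
  norm_cast

theorem lambda_eq_zero_of_projection_convex_combination
    (P T S : H →L[ℂ] H) (hP : IsSelfAdjoint P) (hP2 : IsIdempotentElem P)
    (hP0 : P ≠ 0) (hP1 : P ≠ 1)
    (μ lam : ℝ) (hμ0 : 0 < μ) (hμ1 : μ < 1)
    (hT : T.IsPositive) (hT1 : ((1 : H →L[ℂ] H) - T).IsPositive)
    (hS : S.IsPositive) (hS1 : ((1 : H →L[ℂ] H) - S).IsPositive)
    (hT0 : (0 : ℂ) ∈ spectrum ℂ T) (hS0 : (0 : ℂ) ∈ spectrum ℂ S)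
    (heq : P = μ • T + (1 - μ) • S + lam • (1 : H →L[ℂ] H)) :
    lam = 0 := by
  have hTle : ∀ v : H, T.reApplyInnerSelf v ≤ ‖v‖ ^ 2 := fun v => by
    have := hT1.2 v; rw [sub_reApply] at this; linarith
  have hSle : ∀ v : H, S.reApplyInnerSelf v ≤ ‖v‖ ^ 2 := fun v => by
    have := hS1.2 v; rw [sub_reApply] at this; linarith
  have hPP : ∀ x, P (P x) = P x := fun x => by
    conv_rhs => rw [← hP2]
    rfl
  -- lam ≤ 0
  have hle : lam ≤ 0 := by
    obtain ⟨y, hy⟩ : ∃ y, P y ≠ y := by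
      by_contra h
      push_neg at h
      exact hP1 (ContinuousLinearMap.ext fun x => (h x).trans rfl)
    set w := y - P y with hw
    have hw0 : w ≠ 0 := sub_ne_zero.mpr (fun h => hy h.symm)
    have hPw : P w = 0 := by simp [hw, map_sub, hPP]
    have hkey := key_re T S μ lam w
    rw [← heq, hPw] at hkey
    simp at hkey
    have h1 := hT.2 w
    have h2 := hS.2 w
    have hnw : 0 < ‖w‖ ^ 2 := pow_pos (norm_pos_iff.mpr hw0) 2
    nlinarith
  -- lam ≥ 0
  have hge : 0 ≤ lam := by
    obtain ⟨y, hy⟩ : ∃ y, P y ≠ 0 := by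
      by_contra h
      push_neg at h
      exact hP0 (ContinuousLinearMap.ext fun x => (h x).trans rfl)
    set v := P y with hv
    have hPv : P v = v := hPP y
    have hkey := key_re T S μ lam v
    rw [← heq, hPv] at hkey
    rw [inner_self_eq_norm_sq_to_K] at hkey
    norm_cast at hkey
    have h1 := hTle v
    have h2 := hSle v
    have hnv : 0 < ‖v‖ ^ 2 := pow_pos (norm_pos_iff.mpr hy) 2
    nlinarith
  linarith
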